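/- arXiv:1405.3387 — 2 statements merged into one kernel-verified Lean document; each statement's English description precedes it below -/
import Mathlib

section
/- Let w be a weight on ℝ and {p_k} the orthonormal polynomials with respect to w². Let Φ be a linear functional on the space of polynomials of degree < n, and fix n. If ∑_{k=0}^{n-1} Φ(p_k)² > 0, then (∑_{k=0}^{n-1} Φ(p_k)²)^{-1} = inf over polynomials P of degree at most n-1 with Φ(P) ≠ 0 of (1/Φ(P)²) ∫ |P(t) w(t)|² dt. In particular, taking Φ(P) = P^{(j)}(x) for a fixed x ∈ ℝ and 0 ≤ j < n, one has (∑_{k=0}^{n-1} (p_k^{(j)}(x))²)^{-1} = inf_{P ∈ 𝒫_{n-1}, P^{(j)}(x) ≠ 0} (1/(P^{(j)}(x))²) ∫ |P(t) w(t)|² dt. -/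
open MeasureTheory Polynomial Finset

private lemma span_aux (p : ℕ → Polynomial ℝ)
    (hlc : ∀ k, (p k).natDegree = k ∧ (p k).coeff k ≠ 0) :
    ∀ d (P : Polynomial ℝ), P.natDegree ≤ d →
      ∃ c : ℕ → ℝ, P = ∑ k ∈ Finset.range (d + 1), c k • p k := by
  intro d
  induction d with
  | zero =>
    intro P hP
    refine ⟨fun _ => P.coeff 0 / (p 0).coeff 0, ?_⟩
    rw [Finset.sum_range_one, eq_C_of_natDegree_le_zero hP,
      eq_C_of_natDegree_le_zero ((hlc 0).1.le), smul_C, smul_eq_mul]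
    simp only [coeff_C_zero]
    rw [div_mul_cancel₀ _ (hlc 0).2]
  | succ d ih =>
    intro P hP
    set a : ℝ := P.coeff (d + 1) / (p (d + 1)).coeff (d + 1) with ha
    have hQ : (P - a • p (d + 1)).natDegree ≤ d := by
      refine natDegree_le_iff_coeff_eq_zero.2 fun m hm => ?_
      rcases eq_or_lt_of_le (Nat.succ_le_of_lt hm) with h | h
      · simp only [coeff_sub, coeff_smul, smul_eq_mul, ← h, ha]
        rw [div_mul_cancel₀ _ (hlc (d + 1)).2, sub_self]
      · have h1 : P.coeff m = 0 := coeff_eq_zero_of_natDegree_lt (lt_of_le_of_lt hP h)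
        have h2 : (p (d + 1)).coeff m = 0 :=
          coeff_eq_zero_of_natDegree_lt (by rw [(hlc (d + 1)).1]; exact h)
        simp [h1, h2]
    obtain ⟨c, hc⟩ := ih _ hQ
    refine ⟨fun k => if k = d + 1 then a else c k, ?_⟩
    rw [Finset.sum_range_succ]
    have : ∀ k ∈ Finset.range (d + 1),
        (if k = d + 1 then a else c k) • p k = c k • p k := by
      intro k hk
      have := Finset.mem_range.1 hk
      rw [if_neg (by omega : ¬ k = d + 1)]
    rw [Finset.sum_congr rfl this, ← hc]
    simp

private lemma int_mul (w : ℝ → ℝ)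
    (hint : ∀ P : Polynomial ℝ, Integrable (fun t => (P.eval t)^2 * (w t)^2))
    (P Q : Polynomial ℝ) :
    Integrable (fun t => P.eval t * Q.eval t * (w t)^2) := by
  have h : (fun t => P.eval t * Q.eval t * (w t)^2)
      = fun t => (2⁻¹ : ℝ) * ((((P + Q).eval t)^2 * (w t)^2)
          - ((P.eval t)^2 * (w t)^2) - ((Q.eval t)^2 * (w t)^2)) := by
    funext t
    simp only [eval_add]
    ring
  rw [h]
  exact (((hint (P + Q)).sub (hint P)).sub (hint Q)).const_mul _

private lemma integral_sum_sum (w : ℝ → ℝ)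
    (hint : ∀ P : Polynomial ℝ, Integrable (fun t => (P.eval t)^2 * (w t)^2))
    (p : ℕ → Polynomial ℝ)
    (horth : ∀ k m, ∫ t, (p k).eval t * (p m).eval t * (w t)^2
      = if k = m then (1:ℝ) else 0)
    (n : ℕ) (c : ℕ → ℝ) :
    ∫ t, ((∑ k ∈ Finset.range n, c k • p k).eval t * w t)^2
      = ∑ k ∈ Finset.range n, (c k)^2 := by
  have hrew : (fun t => ((∑ k ∈ Finset.range n, c k • p k).eval t * w t)^2)
      = fun t => ∑ k ∈ Finset.range n, ∑ m ∈ Finset.range n,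
          (c k * c m) * ((p k).eval t * (p m).eval t * (w t)^2) := by
    funext t
    rw [mul_pow, eval_finset_sum]
    simp only [eval_smul, smul_eq_mul]
    rw [sq, Finset.sum_mul_sum, Finset.sum_mul]
    refine Finset.sum_congr rfl fun k _ => ?_
    rw [Finset.sum_mul]
    refine Finset.sum_congr rfl fun m _ => ?_
    ring
  rw [hrew, integral_finset_sum _ fun k _ =>
    integrable_finset_sum _ fun m _ => ((int_mul w hint (p k) (p m)).const_mul _)]
  have : ∀ k ∈ Finset.range n,
      (∫ t, ∑ m ∈ Finset.range n, (c k * c m) * ((p k).eval t * (p m).eval t * (w t)^2))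
        = (c k)^2 := by
    intro k hk
    rw [integral_finset_sum _ fun m _ => ((int_mul w hint (p k) (p m)).const_mul _)]
    have : ∀ m ∈ Finset.range n,
        (∫ t, (c k * c m) * ((p k).eval t * (p m).eval t * (w t)^2))
          = (c k * c m) * if k = m then (1:ℝ) else 0 := by
      intro m _
      rw [MeasureTheory.integral_const_mul, horth]
    rw [Finset.sum_congr rfl this]
    simp only [mul_ite, mul_one, mul_zero]
    rw [Finset.sum_ite_eq (Finset.range n) k (fun m => c k * c m), if_pos hk, sq]
  rw [Finset.sum_congr rfl this]

private lemma main_lemma (w : ℝ → ℝ)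
    (hint : ∀ P : Polynomial ℝ, Integrable (fun t => (P.eval t)^2 * (w t)^2))
    (p : ℕ → Polynomial ℝ) (hdeg : ∀ k, (p k).natDegree = k)
    (horth : ∀ k m, ∫ t, (p k).eval t * (p m).eval t * (w t)^2
      = if k = m then (1:ℝ) else 0)
    (n : ℕ) (Φ : Polynomial ℝ →ₗ[ℝ] ℝ)
    (hΦpos : 0 < ∑ k ∈ Finset.range n, (Φ (p k))^2) :
    (∑ k ∈ Finset.range n, (Φ (p k))^2)⁻¹
      = sInf {r : ℝ | ∃ P : Polynomial ℝ, P.natDegree < n ∧ Φ P ≠ 0 ∧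
          r = (1 / (Φ P)^2) * ∫ t, (P.eval t * w t)^2} := by
  set S := ∑ k ∈ Finset.range n, (Φ (p k))^2 with hSdef
  have hS : S ≠ 0 := ne_of_gt hΦpos
  have hn : 0 < n := by
    rcases Nat.eq_zero_or_pos n with h | h
    · subst h; simp [hSdef] at hΦpos
    · exact h
  have hpk : ∀ k, (p k).coeff k ≠ 0 := by
    intro k
    have hne : p k ≠ 0 := by
      intro h
      have h2 := horth k k
      rw [if_pos rfl, h] at h2
      simp at h2
    have hlc := mt leadingCoeff_eq_zero.mp hne
    rwa [← coeff_natDegree, hdeg] at hlc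
  have hspan : ∀ P : Polynomial ℝ, P.natDegree < n →
      ∃ c : ℕ → ℝ, P = ∑ k ∈ Finset.range n, c k • p k := by
    intro P hP
    obtain ⟨c, hc⟩ := span_aux p (fun k => ⟨hdeg k, hpk k⟩) (n - 1) P (by omega)
    rw [Nat.sub_add_cancel hn] at hc
    exact ⟨c, hc⟩
  have hΦsum : ∀ c : ℕ → ℝ, Φ (∑ k ∈ Finset.range n, c k • p k)
      = ∑ k ∈ Finset.range n, c k * Φ (p k) := by
    intro c
    rw [map_sum]
    exact Finset.sum_congr rfl fun k _ => by rw [_root_.map_smul, smul_eq_mul]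
  -- the extremal polynomial
  set P0 : Polynomial ℝ := ∑ k ∈ Finset.range n, (Φ (p k)) • p k with hP0
  have hΦP0 : Φ P0 = S := by
    rw [hP0, hΦsum, hSdef]
    exact Finset.sum_congr rfl fun k _ => (sq (Φ (p k))).symm
  have hIP0 : (∫ t, (P0.eval t * w t)^2) = S :=
    integral_sum_sum w hint p horth n _
  have hdegP0 : P0.natDegree < n := by
    have h1 : P0.natDegree ≤ n - 1 :=
      natDegree_sum_le_of_forall_le (Finset.range n)
        (fun k => (Φ (p k)) • p k) (fun k hk => by
          refine le_trans (natDegree_smul_le _ _) ?_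
          rw [hdeg]
          have := Finset.mem_range.1 hk
          omega)
    omega
  have hmem : S⁻¹ ∈ {r : ℝ | ∃ P : Polynomial ℝ, P.natDegree < n ∧ Φ P ≠ 0 ∧
      r = (1 / (Φ P)^2) * ∫ t, (P.eval t * w t)^2} := by
    refine ⟨P0, hdegP0, by rw [hΦP0]; exact hS, ?_⟩
    rw [hΦP0, hIP0, sq, one_div, mul_inv, mul_assoc, inv_mul_cancel₀ hS, mul_one]
  have hlb : ∀ r ∈ {r : ℝ | ∃ P : Polynomial ℝ, P.natDegree < n ∧ Φ P ≠ 0 ∧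
      r = (1 / (Φ P)^2) * ∫ t, (P.eval t * w t)^2}, S⁻¹ ≤ r := by
    rintro r ⟨P, hPdeg, hΦP, rfl⟩
    obtain ⟨c, rfl⟩ := hspan P hPdeg
    rw [integral_sum_sum w hint p horth n c]
    have hΦ2 : 0 < (Φ (∑ k ∈ Finset.range n, c k • p k))^2 :=
      lt_of_le_of_ne (sq_nonneg _) (Ne.symm (pow_ne_zero 2 hΦP))
    have hCS : (Φ (∑ k ∈ Finset.range n, c k • p k))^2
        ≤ (∑ k ∈ Finset.range n, (c k)^2) * S := by
      rw [hΦsum, hSdef]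
      exact Finset.sum_mul_sq_le_sq_mul_sq _ c (fun k => Φ (p k))
    rw [one_div, inv_mul_eq_div, le_div_iff₀ hΦ2]
    calc S⁻¹ * (Φ (∑ k ∈ Finset.range n, c k • p k))^2
        ≤ S⁻¹ * ((∑ k ∈ Finset.range n, (c k)^2) * S) :=
          mul_le_mul_of_nonneg_left hCS (inv_nonneg.2 hΦpos.le)
      _ = ∑ k ∈ Finset.range n, (c k)^2 := by
          rw [mul_comm _ S, ← mul_assoc, inv_mul_cancel₀ hS, one_mul]
  exact le_antisymm (le_csInf ⟨_, hmem⟩ hlb) (csInf_le ⟨S⁻¹, fun r hr => hlb r hr⟩ hmem)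

/-- extremal property for a linear functional, with the
derivative-functional special case. -/
theorem christoffel_extremal_linear_functional
    (w : ℝ → ℝ) (hw : ∀ x, 0 < w x)
    (hint : ∀ P : Polynomial ℝ, Integrable (fun t => (P.eval t)^2 * (w t)^2))
    (p : ℕ → Polynomial ℝ) (hdeg : ∀ k, (p k).natDegree = k)
    (horth : ∀ k m, ∫ t, (p k).eval t * (p m).eval t * (w t)^2
      = if k = m then (1:ℝ) else 0)
    (n : ℕ) (Φ : Polynomial ℝ →ₗ[ℝ] ℝ)
    (hΦpos : 0 < ∑ k ∈ Finset.range n, (Φ (p k))^2) :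
    ((∑ k ∈ Finset.range n, (Φ (p k))^2)⁻¹
      = sInf {r : ℝ | ∃ P : Polynomial ℝ, P.natDegree < n ∧ Φ P ≠ 0 ∧
          r = (1 / (Φ P)^2) * ∫ t, (P.eval t * w t)^2}) ∧
    (∀ (x : ℝ) (j : ℕ), j < n →
      0 < ∑ k ∈ Finset.range n, (((Polynomial.derivative)^[j] (p k)).eval x)^2 →
      (∑ k ∈ Finset.range n, (((Polynomial.derivative)^[j] (p k)).eval x)^2)⁻¹
        = sInf {r : ℝ | ∃ P : Polynomial ℝ, P.natDegree < n ∧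
            ((Polynomial.derivative)^[j] P).eval x ≠ 0 ∧
            r = (1 / (((Polynomial.derivative)^[j] P).eval x)^2) *
                ∫ t, (P.eval t * w t)^2}) := by
  refine ⟨main_lemma w hint p hdeg horth n Φ hΦpos, ?_⟩
  intro x j hj hpos
  set Ψ : Polynomial ℝ →ₗ[ℝ] ℝ :=
    (Polynomial.leval x).comp
      ((Polynomial.derivative : Polynomial ℝ →ₗ[ℝ] Polynomial ℝ) ^ j) with hΨ
  have hΨeq : ∀ P : Polynomial ℝ,
      Ψ P = ((Polynomial.derivative)^[j] P).eval x := by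
    intro P
    rw [hΨ]
    simp [Module.End.pow_apply, Polynomial.leval]
  have h := main_lemma w hint p hdeg horth n Ψ (by simpa only [hΨeq] using hpos)
  simpa only [hΨeq] using h
end

section
/- Let a_n > 0 be an increasing sequence with a_n/n → 0, and fix constants C₂, C₆ > 1. Suppose w and T are functions on ℝ such that for all n and all t, x with |t|, |x| ≤ a_{2n} and |t−x| ≤ a_n/(n√(T(x))): T(t)/C₂ ≤ T(x) ≤ C₂ T(t) and w(t)/C₆ ≤ w(x) ≤ C₆ w(t). If additionally for some constants C₃, c₁ > 0 and a polynomial P of degree < n one has ‖(w/√T) P'‖_∞ ≤ C₃ (n/a_n) ‖wP‖_∞, and ζ ∈ ℝ satisfies ‖wP‖_∞ ≤ 2 |w(ζ) P(ζ)| with |ζ| ≤ a_n, then for all t with |t − ζ| ≤ c₁ (a_n/n)/√(T(ζ)), |t| ≤ a_{2n}, and 2 c₁ C C₆ C₃ ≤ 1/2 (for the appropriate comparison constant C between T(u) and T(ζ) on the segment), we have |P(t)| ≥ |P(ζ)|/2. -/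
open MeasureTheory Polynomial Filter

/-- the local lower bound (3.12): |P(t)| ≥ |P(ζ)|/2 on a small
interval around a near-maximum point ζ. -/
theorem local_lower_bound_near_max
    (a : ℕ → ℝ) (ha_pos : ∀ n, 0 < a n) (ha_mono : Monotone a)
    (ha_lim : Tendsto (fun n => a n / (n : ℝ)) atTop (nhds 0))
    (C₂ C₆ C₃ c₁ C : ℝ) (hC₂ : 1 < C₂) (hC₆ : 1 < C₆) (hC₃ : 0 < C₃)
    (hc₁ : 0 < c₁) (hc₁' : c₁ ≤ 1) (hC : 0 < C)
    (w T : ℝ → ℝ) (hw : ∀ x, 0 < w x) (hT : ∀ x, 1 ≤ T x)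
    (n : ℕ) (hn : 1 ≤ n)
    (hcomp : ∀ t x : ℝ, |t| ≤ a (2 * n) → |x| ≤ a (2 * n) →
      |t - x| ≤ a n / ((n : ℝ) * Real.sqrt (T x)) →
      T t / C₂ ≤ T x ∧ T x ≤ C₂ * T t ∧ w t / C₆ ≤ w x ∧ w x ≤ C₆ * w t)
    (P : Polynomial ℝ) (hP : P.natDegree < n)
    (hBern : ∀ x : ℝ, (w x / Real.sqrt (T x)) * |(Polynomial.derivative P).eval x|
      ≤ C₃ * ((n : ℝ) / a n) * ⨆ y : ℝ, |w y * P.eval y|)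
    (ζ : ℝ) (hζ : |ζ| ≤ a n)
    (hζmax : (⨆ y : ℝ, |w y * P.eval y|) ≤ 2 * |w ζ * P.eval ζ|)
    (hCseg : ∀ u : ℝ, |u - ζ| ≤ c₁ * (a n / (n : ℝ)) / Real.sqrt (T ζ) →
      Real.sqrt (T u) ≤ C * Real.sqrt (T ζ))
    (hsmall : 2 * c₁ * C * C₆ * C₃ ≤ 1 / 2) :
    ∀ t : ℝ, |t - ζ| ≤ c₁ * (a n / (n : ℝ)) / Real.sqrt (T ζ) →
      |t| ≤ a (2 * n) →
      |P.eval ζ| / 2 ≤ |P.eval t| := by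
  intro t ht ht2
  have hn' : (0:ℝ) < n := by exact_mod_cast hn
  have han : 0 < a n := ha_pos n
  have hsζ : 1 ≤ Real.sqrt (T ζ) := by
    rw [show (1:ℝ) = Real.sqrt 1 by simp]
    exact Real.sqrt_le_sqrt (hT ζ)
  have hsζ0 : 0 < Real.sqrt (T ζ) := lt_of_lt_of_le one_pos hsζ
  have haan : a n ≤ a (2 * n) := ha_mono (by omega)
  have hζ2 : |ζ| ≤ a (2 * n) := hζ.trans haan
  set r := c₁ * (a n / (n : ℝ)) / Real.sqrt (T ζ) with hr
  set M := ⨆ y : ℝ, |w y * P.eval y| with hM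
  set K := 2 * C₃ * C * C₆ * ((n : ℝ) / a n) * Real.sqrt (T ζ) * |P.eval ζ| with hK
  -- derivative bound on the segment
  have hderiv : ∀ u ∈ Set.uIcc ζ t, |(Polynomial.derivative P).eval u| ≤ K := by
    intro u hu
    have huζ : |u - ζ| ≤ |t - ζ| := by
      rcases le_total ζ t with h | h
      · rw [Set.uIcc_of_le h] at hu
        rw [abs_of_nonneg (by linarith [hu.1]), abs_of_nonneg (by linarith)]
        linarith [hu.2]
      · rw [Set.uIcc_of_ge h] at hu
        rw [abs_of_nonpos (by linarith [hu.2]), abs_of_nonpos (by linarith)]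
        linarith [hu.1]
    have hur : |u - ζ| ≤ r := huζ.trans ht
    have hu2 : |u| ≤ a (2 * n) := by
      rw [abs_le] at hζ2 ht2 ⊢
      rcases le_total ζ t with h | h
      · rw [Set.uIcc_of_le h] at hu
        constructor <;> [linarith [hu.1]; linarith [hu.2]]
      · rw [Set.uIcc_of_ge h] at hu
        constructor <;> [linarith [hu.1]; linarith [hu.2]]
    have hcond : |u - ζ| ≤ a n / ((n : ℝ) * Real.sqrt (T ζ)) := by
      refine hur.trans ?_
      rw [hr]
      calc c₁ * (a n / ↑n) / Real.sqrt (T ζ) ≤ (a n / ↑n) / Real.sqrt (T ζ) := by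
            gcongr
            nlinarith [div_pos han hn']
        _ = a n / ((n : ℝ) * Real.sqrt (T ζ)) := by rw [div_div]
    obtain ⟨_, _, hw1, hw2⟩ := hcomp u ζ hu2 hζ2 hcond
    have hsu : Real.sqrt (T u) ≤ C * Real.sqrt (T ζ) := hCseg u hur
    have hsu0 : 0 < Real.sqrt (T u) := by
      have : 1 ≤ Real.sqrt (T u) := by
        rw [show (1:ℝ) = Real.sqrt 1 by simp]
        exact Real.sqrt_le_sqrt (hT u)
      linarith
    have hb := hBern u
    have hMle : M ≤ 2 * (w ζ * |P.eval ζ|) := by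
      have := hζmax
      rw [abs_mul, abs_of_pos (hw ζ)] at this
      linarith
    have hwu : 0 < w u := hw u
    have hwζ : 0 < w ζ := hw ζ
    have hPd : (0:ℝ) ≤ |(Polynomial.derivative P).eval u| := abs_nonneg _
    -- from hb: |P'(u)| ≤ C₃ (n/a n) M * √T u / w u
    have h1 : |(Polynomial.derivative P).eval u| ≤
        C₃ * ((n : ℝ) / a n) * M * Real.sqrt (T u) / w u := by
      rw [le_div_iff₀ hwu]
      calc |(Polynomial.derivative P).eval u| * w u
          = (w u / Real.sqrt (T u)) * |(Polynomial.derivative P).eval u| * Real.sqrt (T u) := by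
            field_simp
        _ ≤ C₃ * ((n : ℝ) / a n) * M * Real.sqrt (T u) := by
            apply mul_le_mul_of_nonneg_right hb (le_of_lt hsu0)
    refine h1.trans ?_
    have hM0 : 0 ≤ M := Real.iSup_nonneg fun y => abs_nonneg _
    have hα : 0 ≤ C₃ * ((n : ℝ) / a n) := by positivity
    rw [hK, div_le_iff₀ hwu]
    calc C₃ * ((n : ℝ) / a n) * M * Real.sqrt (T u)
        ≤ C₃ * ((n : ℝ) / a n) * (2 * (w ζ * |P.eval ζ|)) * Real.sqrt (T u) := by
          gcongr
      _ ≤ C₃ * ((n : ℝ) / a n) * (2 * (w ζ * |P.eval ζ|)) * (C * Real.sqrt (T ζ)) := by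
          gcongr
      _ ≤ C₃ * ((n : ℝ) / a n) * (2 * ((C₆ * w u) * |P.eval ζ|)) * (C * Real.sqrt (T ζ)) := by
          gcongr
      _ = 2 * C₃ * C * C₆ * ((n : ℝ) / a n) * Real.sqrt (T ζ) * |P.eval ζ| * w u := by
          ring
  have hK0 : 0 ≤ K := by positivity
  -- MVT on the segment
  have hMVT : |P.eval t - P.eval ζ| ≤ K * |t - ζ| := by
    have hd : ∀ u ∈ Set.uIcc ζ t, HasDerivWithinAt (fun x => P.eval x)
        ((Polynomial.derivative P).eval u) (Set.uIcc ζ t) u :=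
      fun u _ => (P.hasDerivAt u).hasDerivWithinAt
    have hb' : ∀ u ∈ Set.uIcc ζ t, ‖(Polynomial.derivative P).eval u‖ ≤ K :=
      fun u hu => by simpa [Real.norm_eq_abs] using hderiv u hu
    have := Convex.norm_image_sub_le_of_norm_hasDerivWithin_le hd hb' (convex_uIcc ζ t)
      Set.left_mem_uIcc Set.right_mem_uIcc
    simpa [Real.norm_eq_abs] using this
  have hfinal : |P.eval t - P.eval ζ| ≤ |P.eval ζ| / 2 := by
    have h2 : K * |t - ζ| ≤ K * r := mul_le_mul_of_nonneg_left ht hK0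
    have h3 : K * r ≤ |P.eval ζ| / 2 := by
      rw [hK, hr]
      have : 2 * C₃ * C * C₆ * ((n : ℝ) / a n) * Real.sqrt (T ζ) * |P.eval ζ| *
          (c₁ * (a n / (n : ℝ)) / Real.sqrt (T ζ)) = 2 * c₁ * C * C₆ * C₃ * |P.eval ζ| := by
        field_simp
      rw [this]
      nlinarith [abs_nonneg (P.eval ζ)]
    linarith [hMVT]
  calc |P.eval ζ| / 2 = |P.eval ζ| - |P.eval ζ| / 2 := by ring
    _ ≤ |P.eval ζ| - |P.eval t - P.eval ζ| := by linarith
    _ ≤ |P.eval t| := by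
        have := abs_sub_abs_le_abs_sub (P.eval ζ) (P.eval t)
        rw [abs_sub_comm] at this
        linarith
end
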